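/- Fix r, s ∈ ℚ and let g be a formal power series over ℚ satisfying g = 1 + r·X·g + s·X·g². Then in the polynomial ring (ℚ⟦X⟧)[Y] one has the identity g·(Y - r·X·Y - X·Y² - s) = (Y - s·g)·(1 - X·Y·g). Equivalently, the bivariate generating function of the Bell matrix (g, Xg) factors as g/(1-yxg) = (1 - s·g/y)·1/(1 - rx - xy - s/y), exhibiting that (g, Xg) counts lattice paths from (0,0) to (n,k) with r colored (1,0) steps, a (1,1) step, and s colored (0,-1) steps. -/

import Mathlib

/-- For `r, s : ℚ` and `g : ℚ⟦X⟧` with `g = 1 + rXg + sXg²`, in `(ℚ⟦X⟧)[Y]` one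
has `g·(Y - rXY - XY² - s) = (Y - sg)·(1 - XYg)`: the generating function of the Bell matrix
`(g, Xg)` factors as `g/(1-yxg) = (1 - sg/y)·1/(1 - rx - xy - s/y)`, exhibiting lattice paths
with `r` colored `(1,0)` steps, a `(1,1)` step and `s` colored `(0,-1)` steps. -/
theorem stmt_8 (r s : ℚ) (g : PowerSeries ℚ)
    (hg : g = 1 + PowerSeries.C r * PowerSeries.X * g
      + PowerSeries.C s * PowerSeries.X * g ^ 2) :
    Polynomial.C g * (Polynomial.X
        - Polynomial.C (PowerSeries.C r * PowerSeries.X) * Polynomial.X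
        - Polynomial.C (PowerSeries.X : PowerSeries ℚ) * Polynomial.X ^ 2
        - Polynomial.C (PowerSeries.C s))
    = (Polynomial.X - Polynomial.C (PowerSeries.C s * g))
        * (1 - Polynomial.C (PowerSeries.X : PowerSeries ℚ) * Polynomial.X * Polynomial.C g) := by
  have hg' : (Polynomial.C g : Polynomial (PowerSeries ℚ))
      = Polynomial.C (1 + PowerSeries.C r * PowerSeries.X * g
        + PowerSeries.C s * PowerSeries.X * g ^ 2) := by rw [← hg]
  simp only [map_add, map_mul, map_one, map_pow] at hg'
  simp only [map_mul]
  linear_combination Polynomial.X * hg'
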